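/- Let s ≥ 1 and t ≥ 2 be integers, for each j ∈ [s] let T_j ⊆ [t] be a set of exactly two bidders, and let 𝒜 be a set of functions A : [s] → [t] with A(j) ∈ T_j for all j. Suppose 0 < ε ≤ 1/2 and |𝒜| ≥ 2^{(1−ε)s}. Then there exist V ⊆ [t] with |V| ≥ 2 and E ⊆ [s] with T_j ⊆ V for all j ∈ E such that, for every partition of V into r ≥ 2 nonempty parts, letting C := {j ∈ E : the two elements of T_j lie in different parts of the partition}, the following hold: (i) |C| ≥ ε(r−1)s/t; and (ii) for every function g : C → [t] with g(j) ∈ T_j for all j ∈ C, the number of functions in 𝒜|_E (the set of restrictions to E of members of 𝒜) that agree with g on C is at most 2^{−(1−2ε)|C|} · |𝒜|_E|. -/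

import Mathlib

set_option maxHeartbeats 1000000

open Finset

namespace GoodSG

variable {s t : ℕ}

/-- pad a function to be `d` outside `E` -/
def pad (E : Finset (Fin s)) (d : Fin t) (A : Fin s → Fin t) : Fin s → Fin t :=
  fun j => if j ∈ E then A j else d

lemma pad_pad {E' E : Finset (Fin s)} (h : E' ⊆ E) (d : Fin t) (A : Fin s → Fin t) :
    pad E' d (pad E d A) = pad E' d A := by
  funext j
  simp only [pad]
  by_cases hj : j ∈ E'
  · simp [hj, h hj]
  · simp [hj]

noncomputable def res (𝒜 : Set (Fin s → Fin t)) (d : Fin t) (E : Finset (Fin s)) :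
    Finset (Fin s → Fin t) :=
  (Set.toFinite 𝒜).toFinset.image (pad E d)

lemma mem_res {𝒜 : Set (Fin s → Fin t)} {d : Fin t} {E : Finset (Fin s)}
    {B : Fin s → Fin t} : B ∈ res 𝒜 d E ↔ ∃ A ∈ 𝒜, pad E d A = B := by
  simp [res, Set.Finite.mem_toFinset]

lemma res_nonempty {𝒜 : Set (Fin s → Fin t)} (h : 𝒜.Nonempty) (d : Fin t)
    (E : Finset (Fin s)) : (res 𝒜 d E).Nonempty := by
  obtain ⟨A, hA⟩ := h
  exact ⟨pad E d A, mem_res.2 ⟨A, hA, rfl⟩⟩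

section counting

variable {𝒜 : Set (Fin s → Fin t)} {d : Fin t} (T : Fin s → Finset (Fin t))
  (h𝒜 : ∀ A ∈ 𝒜, ∀ j, A j ∈ T j) (hT : ∀ j, (T j).card = 2)

lemma prod_two_pow (C : Finset (Fin s)) (v : Fin s → ℕ) (h2 : ∀ j ∈ C, v j = 2)
    (h1 : ∀ j ∉ C, v j = 1) : ∏ j, v j = 2 ^ C.card := by
  calc ∏ j, v j = ∏ j, if j ∈ C then 2 else 1 := by
        refine Finset.prod_congr rfl fun j _ => ?_
        by_cases hj : j ∈ C
        · simp [hj, h2 j hj]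
        · simp [hj, h1 j hj]
    _ = ∏ _j ∈ Finset.univ.filter (· ∈ C), 2 := (Finset.prod_filter _ _).symm
    _ = 2 ^ C.card := by
        rw [Finset.prod_const]
        congr 1
        simp

include h𝒜 hT in
/-- L1 -/
lemma res_card_le (E : Finset (Fin s)) : (res 𝒜 d E).card ≤ 2 ^ E.card := by
  calc (res 𝒜 d E).card
      ≤ (Fintype.piFinset (fun j => if j ∈ E then T j else {d})).card := by
        apply Finset.card_le_card
        intro B hB
        obtain ⟨A, hA, rfl⟩ := mem_res.1 hB
        simp only [Fintype.mem_piFinset]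
        intro j
        by_cases hj : j ∈ E
        · simp [pad, hj, h𝒜 A hA j]
        · simp [pad, hj]
    _ = 2 ^ E.card := by
        rw [Fintype.card_piFinset]
        apply prod_two_pow E
        · intro j hj; simp [hj, hT j]
        · intro j hj; simp [hj]

include h𝒜 hT in
/-- L2 -/
lemma res_card_le_mul {C E : Finset (Fin s)} (hCE : C ⊆ E) :
    (res 𝒜 d E).card ≤ 2 ^ C.card * (res 𝒜 d (E \ C)).card := by
  have himg : (res 𝒜 d E).image (pad (E \ C) d) = res 𝒜 d (E \ C) := by
    rw [res, Finset.image_image, res]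
    congr 1
    funext A
    exact pad_pad Finset.sdiff_subset d A
  have := Finset.card_le_mul_card_image (f := pad (E \ C) d) (res 𝒜 d E) (2 ^ C.card) ?_
  · rwa [himg] at this
  intro B hB
  calc ((res 𝒜 d E).filter (fun B' => pad (E \ C) d B' = B)).card
      ≤ (Fintype.piFinset (fun j => if j ∈ C then T j else {B j})).card := by
        apply Finset.card_le_card
        intro B' hB'
        obtain ⟨hB'res, hfib⟩ := Finset.mem_filter.1 hB'
        obtain ⟨A, hA, rfl⟩ := mem_res.1 hB'res
        simp only [Fintype.mem_piFinset]
        intro j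
        by_cases hjC : j ∈ C
        · simp [pad, hjC, hCE hjC, h𝒜 A hA j]
        · have : B j = pad (E \ C) d (pad E d A) j := (congrFun hfib j).symm
          by_cases hjE : j ∈ E
          · have hj2 : j ∈ E \ C := Finset.mem_sdiff.2 ⟨hjE, hjC⟩
            simp only [pad, if_pos hj2] at this
            simp [pad, hjC, this]
          · have hj2 : j ∉ E \ C := fun h => hjE (Finset.mem_sdiff.1 h).1
            simp only [pad, if_neg hj2] at this
            simp [pad, hjC, hjE, this]
    _ = 2 ^ C.card := by
        rw [Fintype.card_piFinset]
        apply prod_two_pow C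
        · intro j hj; simp [hj, hT j]
        · intro j hj; simp [hj]

/-- L3 -/
lemma res_card_le_prod {r : ℕ} (q : Fin s → Fin r) (F : Finset (Fin s)) :
    (res 𝒜 d F).card ≤ ∏ i : Fin r, (res 𝒜 d (F.filter (fun j => q j = i))).card := by
  rw [← Fintype.card_piFinset]
  apply Finset.card_le_card_of_injOn (fun B => fun i => pad (F.filter (fun j => q j = i)) d B)
  · intro B hB
    simp only [Finset.mem_coe, Fintype.mem_piFinset]
    intro i
    obtain ⟨A, hA, rfl⟩ := mem_res.1 hB
    rw [pad_pad (Finset.filter_subset _ _)]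
    exact mem_res.2 ⟨A, hA, rfl⟩
  · intro B1 h1 B2 h2 heq
    obtain ⟨A1, hA1, rfl⟩ := mem_res.1 h1
    obtain ⟨A2, hA2, rfl⟩ := mem_res.1 h2
    funext j
    by_cases hj : j ∈ F
    · have hjf : j ∈ F.filter (fun j' => q j' = q j) := Finset.mem_filter.2 ⟨hj, rfl⟩
      have := congrFun (congrFun heq (q j)) j
      simp only [pad, if_pos hjf, if_pos hj] at this ⊢
      exact this
    · simp [pad, hj]

/-- L4 -/
lemma filter_agree_card_le {C E : Finset (Fin s)} (hCE : C ⊆ E) (g : Fin s → Fin t) :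
    ((res 𝒜 d E).filter (fun B => ∀ j ∈ C, B j = g j)).card ≤ (res 𝒜 d (E \ C)).card := by
  apply Finset.card_le_card_of_injOn (pad (E \ C) d)
  · intro B hB
    obtain ⟨A, hA, rfl⟩ := mem_res.1 (Finset.mem_filter.1 hB).1
    rw [pad_pad Finset.sdiff_subset]
    exact mem_res.2 ⟨A, hA, rfl⟩
  · intro B1 h1 B2 h2 heq
    obtain ⟨hB1, hag1⟩ := Finset.mem_filter.1 h1
    obtain ⟨hB2, hag2⟩ := Finset.mem_filter.1 h2
    obtain ⟨A1, hA1, e1⟩ := mem_res.1 hB1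
    obtain ⟨A2, hA2, e2⟩ := mem_res.1 hB2
    funext j
    by_cases hjC : j ∈ C
    · rw [hag1 j hjC, hag2 j hjC]
    · by_cases hjE : j ∈ E \ C
      · have := congrFun heq j
        simp only [pad, if_pos hjE] at this
        exact this
      · have hjE' : j ∉ E := fun h => hjE (Finset.mem_sdiff.2 ⟨h, hjC⟩)
        rw [← e1, ← e2]
        simp [pad, hjE']

end counting


-- translation lemma 1
lemma ncard_image_res (𝒜 : Set (Fin s → Fin t)) (d : Fin t) (E : Finset (Fin s)) :
    ((fun (A : Fin s → Fin t) (x : {x : Fin s // x ∈ E}) => A x.1) '' 𝒜).ncard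
      = (res 𝒜 d E).card := by
  set ψ : (Fin s → Fin t) → ({x : Fin s // x ∈ E} → Fin t) := fun B x => B x.1 with hψ
  have hset : ψ '' 𝒜 = ψ '' ↑(res 𝒜 d E) := by
    ext b
    constructor
    · rintro ⟨A, hA, rfl⟩
      refine ⟨pad E d A, by simpa using mem_res.2 ⟨A, hA, rfl⟩, ?_⟩
      funext x
      simp [ψ, pad, x.2]
    · rintro ⟨B, hB, rfl⟩
      obtain ⟨A, hA, rfl⟩ := mem_res.1 (by simpa using hB)
      refine ⟨A, hA, ?_⟩
      funext x
      simp [ψ, pad, x.2]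
  have hinj : Set.InjOn ψ ↑(res 𝒜 d E) := by
    intro B1 h1 B2 h2 heq
    obtain ⟨A1, hA1, rfl⟩ := mem_res.1 (by simpa using h1)
    obtain ⟨A2, hA2, rfl⟩ := mem_res.1 (by simpa using h2)
    funext j
    by_cases hj : j ∈ E
    · have := congrFun heq ⟨j, hj⟩
      simpa [ψ] using this
    · simp [pad, hj]
  rw [hset, Set.ncard_image_of_injOn hinj, Set.ncard_coe_finset]

-- translation lemma 2
lemma ncard_image_res_filter (𝒜 : Set (Fin s → Fin t)) (d : Fin t)
    {C E : Finset (Fin s)} (hCE : C ⊆ E) (g : Fin s → Fin t) :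
    {B ∈ ((fun (A : Fin s → Fin t) (x : {x : Fin s // x ∈ E}) => A x.1) '' 𝒜) |
        ∀ x : {x : Fin s // x ∈ E}, x.1 ∈ C → B x = g x.1}.ncard
      = ((res 𝒜 d E).filter (fun B => ∀ j ∈ C, B j = g j)).card := by
  set ψ : (Fin s → Fin t) → ({x : Fin s // x ∈ E} → Fin t) := fun B x => B x.1 with hψ
  have hset : {B ∈ ψ '' 𝒜 | ∀ x : {x : Fin s // x ∈ E}, x.1 ∈ C → B x = g x.1}
      = ψ '' ↑((res 𝒜 d E).filter (fun B => ∀ j ∈ C, B j = g j)) := by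
    ext b
    constructor
    · rintro ⟨⟨A, hA, rfl⟩, hag⟩
      refine ⟨pad E d A, ?_, ?_⟩
      · simp only [Finset.coe_filter, Set.mem_setOf_eq]
        refine ⟨mem_res.2 ⟨A, hA, rfl⟩, ?_⟩
        intro j hj
        have := hag ⟨j, hCE hj⟩ hj
        simpa [ψ, pad, hCE hj] using this
      · funext x
        simp [ψ, pad, x.2]
    · rintro ⟨B, hB, rfl⟩
      simp only [Finset.coe_filter, Set.mem_setOf_eq] at hB
      obtain ⟨hBres, hag⟩ := hB
      obtain ⟨A, hA, rfl⟩ := mem_res.1 hBres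
      constructor
      · refine ⟨A, hA, ?_⟩
        funext x
        simp [ψ, pad, x.2]
      · intro x hx
        exact hag x.1 hx
  have hinj : Set.InjOn ψ ↑((res 𝒜 d E).filter (fun B => ∀ j ∈ C, B j = g j)) := by
    intro B1 h1 B2 h2 heq
    simp only [Finset.coe_filter, Set.mem_setOf_eq] at h1 h2
    obtain ⟨A1, hA1, rfl⟩ := mem_res.1 h1.1
    obtain ⟨A2, hA2, rfl⟩ := mem_res.1 h2.1
    funext j
    by_cases hj : j ∈ E
    · have := congrFun heq ⟨j, hj⟩
      simpa [ψ] using this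
    · simp [pad, hj]
  rw [hset, Set.ncard_image_of_injOn hinj, Set.ncard_coe_finset]


-- new definitions
def VV (T : Fin s → Finset (Fin t)) (E : Finset (Fin s)) : Finset (Fin t) := E.biUnion T

def cross (T : Fin s → Finset (Fin t)) {r : ℕ} (P : Fin t → Fin r) (E : Finset (Fin s)) :
    Finset (Fin s) :=
  E.filter fun j => ∃ a ∈ T j, ∃ b ∈ T j, P a ≠ P b

def Inv (T : Fin s → Finset (Fin t)) (𝒜 : Set (Fin s → Fin t)) (d : Fin t) (ε : ℝ)
    (E : Finset (Fin s)) : Prop :=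
  (2 : ℝ) ^ ((1 - 2 * ε) * (E.card : ℝ)
      + ε * (s : ℝ) / ((t : ℝ) - 1) * (((VV T E).card : ℝ) - 1))
    ≤ ((res 𝒜 d E).card : ℝ)

def Final (T : Fin s → Finset (Fin t)) (𝒜 : Set (Fin s → Fin t)) (d : Fin t) (ε : ℝ)
    (E : Finset (Fin s)) : Prop :=
  ∀ r : ℕ, 2 ≤ r → ∀ P : Fin t → Fin r, (∀ p : Fin r, ∃ i ∈ VV T E, P i = p) →
    (ε * ((r : ℝ) - 1) * (s : ℝ) / (t : ℝ) ≤ ((cross T P E).card : ℝ)) ∧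
    ∀ g : Fin s → Fin t,
      ((((res 𝒜 d E).filter (fun B => ∀ j ∈ cross T P E, B j = g j)).card : ℝ))
        ≤ (2 : ℝ) ^ (-(1 - 2 * ε) * ((cross T P E).card : ℝ)) * ((res 𝒜 d E).card : ℝ)

lemma two_le_VV_card (T : Fin s → Finset (Fin t)) (hT : ∀ j, (T j).card = 2)
    {E : Finset (Fin s)} (hne : E.Nonempty) : 2 ≤ (VV T E).card := by
  obtain ⟨j, hj⟩ := hne
  calc 2 = (T j).card := (hT j).symm
    _ ≤ (VV T E).card := Finset.card_le_card (Finset.subset_biUnion_of_mem T hj)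

lemma main_rec (hs : 1 ≤ s) (ht : 2 ≤ t) (T : Fin s → Finset (Fin t))
    (hT : ∀ j, (T j).card = 2) (𝒜 : Set (Fin s → Fin t))
    (h𝒜 : ∀ A ∈ 𝒜, ∀ j, A j ∈ T j) (h𝒜ne : 𝒜.Nonempty)
    (ε : ℝ) (hε0 : 0 < ε) (hε : ε ≤ 1 / 2) (d : Fin t) :
    ∀ n : ℕ, ∀ E : Finset (Fin s), E.card ≤ n → E.Nonempty → Inv T 𝒜 d ε E →
      ∃ E' : Finset (Fin s), E'.Nonempty ∧ Final T 𝒜 d ε E' := by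
  have ht1 : (0 : ℝ) < (t : ℝ) - 1 := by
    have : (2 : ℝ) ≤ (t : ℝ) := by exact_mod_cast ht
    linarith
  have ht0 : (0 : ℝ) < (t : ℝ) := by linarith
  have hs0 : (1 : ℝ) ≤ (s : ℝ) := by exact_mod_cast hs
  intro n
  induction n with
  | zero =>
    intro E hc hne _
    exact absurd (Finset.card_eq_zero.1 (Nat.le_zero.1 hc))
      (Finset.nonempty_iff_ne_empty.1 hne)
  | succ n ih =>
    intro E hcard hne hInv
    by_cases hfin : Final T 𝒜 d ε E
    · exact ⟨E, hne, hfin⟩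
    unfold Final at hfin
    push_neg at hfin
    obtain ⟨r, hr, P, hsurj, hviol⟩ := hfin
    set C : Finset (Fin s) := cross T P E with hC
    have hCE : C ⊆ E := Finset.filter_subset _ _
    have hvE : 2 ≤ (VV T E).card := two_le_VV_card T hT hne
    by_cases hii : ∃ g : Fin s → Fin t,
        (2 : ℝ) ^ (-(1 - 2 * ε) * (C.card : ℝ)) * ((res 𝒜 d E).card : ℝ)
          < (((res 𝒜 d E).filter (fun B => ∀ j ∈ C, B j = g j)).card : ℝ)
    · -- case (ii) violated
      obtain ⟨g, hg⟩ := hii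
      unfold Inv at hInv
      set c : ℝ := ε * (s : ℝ) / ((t : ℝ) - 1) with hc
      have hc0 : 0 < c := by
        apply div_pos (mul_pos hε0 (by linarith)) ht1
      set E2 : Finset (Fin s) := E \ C with hE2
      set N : ℝ := ((res 𝒜 d E).card : ℝ) with hN
      have hCne : C.Nonempty := by
        rw [Finset.nonempty_iff_ne_empty]
        intro h0
        rw [h0] at hg
        simp only [Finset.card_empty, Nat.cast_zero, mul_zero, neg_zero, Real.rpow_zero,
          one_mul] at hg
        have hle : (((res 𝒜 d E).filter
            (fun B => ∀ j ∈ (∅ : Finset (Fin s)), B j = g j)).card : ℝ) ≤ N := by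
          rw [hN]
          exact_mod_cast Finset.card_le_card (Finset.filter_subset _ _)
        linarith
      have hE2card : ((E2).card : ℝ) = (E.card : ℝ) - (C.card : ℝ) := by
        rw [hE2, Finset.card_sdiff_of_subset hCE, Nat.cast_sub (Finset.card_le_card hCE)]
      have hvE' : (2 : ℝ) ≤ ((VV T E).card : ℝ) := by exact_mod_cast hvE
      have hδpos : 0 < c * (((VV T E).card : ℝ) - 1) := by
        apply mul_pos hc0
        linarith
      have hkey : (2 : ℝ) ^ ((1 - 2 * ε) * ((E2).card : ℝ)
            + c * (((VV T E).card : ℝ) - 1))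
          < ((res 𝒜 d E2).card : ℝ) := by
        have h1 : (2 : ℝ) ^ ((1 - 2 * ε) * ((E2).card : ℝ) + c * (((VV T E).card : ℝ) - 1))
            = (2 : ℝ) ^ (-(1 - 2 * ε) * ((C.card : ℝ))) *
              (2 : ℝ) ^ ((1 - 2 * ε) * ((E.card : ℝ)) + c * (((VV T E).card : ℝ) - 1)) := by
          rw [← Real.rpow_add two_pos]
          congr 1
          rw [hE2card]
          ring
        rw [h1]
        calc (2 : ℝ) ^ (-(1 - 2 * ε) * ((C.card : ℝ))) *
              (2 : ℝ) ^ ((1 - 2 * ε) * ((E.card : ℝ)) + c * (((VV T E).card : ℝ) - 1))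
            ≤ (2 : ℝ) ^ (-(1 - 2 * ε) * ((C.card : ℝ))) * N :=
              mul_le_mul_of_nonneg_left hInv (Real.rpow_nonneg (by norm_num) _)
          _ < _ := hg
          _ ≤ ((res 𝒜 d E2).card : ℝ) := by
              rw [hE2]
              exact_mod_cast filter_agree_card_le hCE g
      have hE2ne : E2.Nonempty := by
        rw [Finset.nonempty_iff_ne_empty]
        intro h0
        rw [h0] at hkey
        have hle1 : ((res 𝒜 d (∅ : Finset (Fin s))).card : ℝ) ≤ 1 := by
          have h := res_card_le (𝒜 := 𝒜) (d := d) T h𝒜 hT (∅ : Finset (Fin s))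
          simp only [Finset.card_empty, pow_zero] at h
          exact_mod_cast h
        simp only [Finset.card_empty, Nat.cast_zero, mul_zero, zero_add] at hkey
        have h2 : (1 : ℝ) < (2 : ℝ) ^ (c * (((VV T E).card : ℝ) - 1)) := by
          rw [Real.one_lt_rpow_iff_of_pos two_pos]
          exact Or.inl ⟨one_lt_two, hδpos⟩
        linarith
      have hInv2 : Inv T 𝒜 d ε E2 := by
        unfold Inv
        rw [← hc]
        refine le_trans ?_ (le_of_lt hkey)
        rw [Real.rpow_le_rpow_left_iff one_lt_two]
        have hVV2 : ((VV T E2).card : ℝ) ≤ ((VV T E).card : ℝ) := by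
          exact_mod_cast Finset.card_le_card
            (Finset.biUnion_subset_biUnion_of_subset_left T Finset.sdiff_subset)
        nlinarith [hc0]
      have hE2le : E2.card ≤ n := by
        have h1 : E2.card = E.card - C.card := Finset.card_sdiff_of_subset hCE
        have h2 : 1 ≤ C.card := Finset.card_pos.2 hCne
        have h3 : C.card ≤ E.card := Finset.card_le_card hCE
        omega
      exact ih E2 hE2le hE2ne hInv2
    · -- case (i) violated
      push_neg at hii
      have hA : (C.card : ℝ) < ε * ((r : ℝ) - 1) * (s : ℝ) / (t : ℝ) := by
        by_contra hA'
        push_neg at hA'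
        obtain ⟨g, hg⟩ := hviol hA'
        exact absurd hg (not_lt.2 (hii g))
      -- case (i) setup
      unfold Inv at hInv
      set c : ℝ := ε * (s : ℝ) / ((t : ℝ) - 1) with hc
      have hc0 : 0 < c := div_pos (mul_pos hε0 (by linarith)) ht1
      set N : ℝ := ((res 𝒜 d E).card : ℝ) with hN
      have hr' : (2 : ℝ) ≤ (r : ℝ) := by exact_mod_cast hr
      set a : ℝ := ε * ((r : ℝ) - 1) * (s : ℝ) with ha
      have ha0 : 0 < a := by
        apply mul_pos (mul_pos hε0 (by linarith)) (by linarith)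
      have hat : a / (t : ℝ) ≤ a / ((t : ℝ) - 1) := by
        rw [div_le_div_iff₀ ht0 ht1]
        nlinarith
      have hca : c * ((r : ℝ) - 1) = a / ((t : ℝ) - 1) := by
        rw [hc, ha]
        ring
      have hC0 : (0 : ℝ) ≤ (C.card : ℝ) := by positivity
      -- it suffices to derive (X) : a/(t-1) ≤ 2 ε |C|
      have hTne : ∀ j, (T j).Nonempty := fun j => Finset.card_pos.1 (by rw [hT j]; norm_num)
      set q : Fin s → Fin r := fun j => P ((T j).min' (hTne j)) with hq
      set EE : Fin r → Finset (Fin s) := fun i => (E \ C).filter (fun j => q j = i) with hEE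
      set u : Fin r → ℕ := fun i => ((VV T E).filter (fun x => P x = i)).card with hu
      have hmono : ∀ j ∈ E, j ∉ C → ∀ x ∈ T j, P x = q j := by
        intro j hjE hjC x hx
        have hnot : ¬ (∃ a' ∈ T j, ∃ b ∈ T j, P a' ≠ P b) := by
          intro hcontra
          exact hjC (Finset.mem_filter.2 ⟨hjE, hcontra⟩)
        push_neg at hnot
        exact hnot x hx ((T j).min' (hTne j)) (Finset.min'_mem _ _)
      have hsum_e : ∑ i, (EE i).card = (E \ C).card :=
        (Finset.card_eq_sum_card_fiberwise (f := q) (fun j _ => Finset.mem_univ (q j))).symm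
      have hsum_u : ∑ i, u i = (VV T E).card :=
        (Finset.card_eq_sum_card_fiberwise (f := P) (fun x _ => Finset.mem_univ (P x))).symm
      have hu1 : ∀ i, 1 ≤ u i := by
        intro i
        obtain ⟨x, hx, hPx⟩ := hsurj i
        exact Finset.card_pos.2 ⟨x, Finset.mem_filter.2 ⟨hx, hPx⟩⟩
      have hVVi : ∀ i, (VV T (EE i)).card ≤ u i := by
        intro i
        apply Finset.card_le_card
        intro x hx
        obtain ⟨j, hj, hxj⟩ := Finset.mem_biUnion.1 hx
        have hj' := Finset.mem_filter.1 hj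
        have hjE : j ∈ E := (Finset.mem_sdiff.1 hj'.1).1
        have hjC : j ∉ C := (Finset.mem_sdiff.1 hj'.1).2
        refine Finset.mem_filter.2 ⟨Finset.mem_biUnion.2 ⟨j, hjE, hxj⟩, ?_⟩
        rw [hmono j hjE hjC x hxj, hj'.2]
      have hrv : r ≤ (VV T E).card := by
        calc r = ∑ _i : Fin r, 1 := by simp
          _ ≤ ∑ i, u i := Finset.sum_le_sum (fun i _ => hu1 i)
          _ = _ := hsum_u
      have hrv' : (r : ℝ) ≤ ((VV T E).card : ℝ) := by exact_mod_cast hrv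
      have hECcard : (((E \ C).card : ℕ) : ℝ) = (E.card : ℝ) - (C.card : ℝ) := by
        rw [Finset.card_sdiff_of_subset hCE, Nat.cast_sub (Finset.card_le_card hCE)]
      have hstep : ∃ i, (EE i).Nonempty ∧ Inv T 𝒜 d ε (EE i) := by
        by_contra hcon
        push_neg at hcon
        have hX : a / ((t : ℝ) - 1) ≤ 2 * ε * (C.card : ℝ) := by
          rcases Finset.eq_empty_or_nonempty (E \ C) with h0 | h0
          · -- subcase A : E = C
            have hEC : E = C := Finset.Subset.antisymm
              (Finset.sdiff_eq_empty_iff_subset.1 h0) hCE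
            have hN2 : N ≤ (2 : ℝ) ^ ((E.card : ℕ) : ℝ) := by
              rw [Real.rpow_natCast, hN]
              exact_mod_cast res_card_le (𝒜 := 𝒜) (d := d) T h𝒜 hT E
            have hexp : (1 - 2 * ε) * (E.card : ℝ)
                + c * (((VV T E).card : ℝ) - 1) ≤ ((E.card : ℕ) : ℝ) :=
              (Real.rpow_le_rpow_left_iff one_lt_two).1 (le_trans hInv hN2)
            have h5 : c * ((r : ℝ) - 1) ≤ c * (((VV T E).card : ℝ) - 1) := by
              apply mul_le_mul_of_nonneg_left _ (le_of_lt hc0)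
              linarith
            rw [← hca]
            have hEC' : (E.card : ℝ) = (C.card : ℝ) := by rw [hEC]
            nlinarith
          · -- subcase B
            have hble : ∀ i, ((res 𝒜 d (EE i)).card : ℝ)
                ≤ (2 : ℝ) ^ ((1 - 2 * ε) * ((EE i).card : ℝ) + c * ((u i : ℝ) - 1)) := by
              intro i
              have hui : (1 : ℝ) ≤ (u i : ℝ) := by exact_mod_cast hu1 i
              rcases Finset.eq_empty_or_nonempty (EE i) with hei | hei
              · rw [hei]
                have hle1 : ((res 𝒜 d (∅ : Finset (Fin s))).card : ℝ) ≤ 1 := by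
                  have h := res_card_le (𝒜 := 𝒜) (d := d) T h𝒜 hT (∅ : Finset (Fin s))
                  simp only [Finset.card_empty, pow_zero] at h
                  exact_mod_cast h
                refine le_trans hle1 ?_
                rw [show ((∅ : Finset (Fin s)).card : ℝ) = 0 by simp, mul_zero, zero_add]
                apply Real.one_le_rpow one_le_two
                nlinarith
              · have hni := hcon i hei
                unfold Inv at hni
                rw [← hc] at hni
                push_neg at hni
                refine le_trans (le_of_lt hni) ?_
                rw [Real.rpow_le_rpow_left_iff one_lt_two]
                have hwi : ((VV T (EE i)).card : ℝ) ≤ (u i : ℝ) := by exact_mod_cast hVVi i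
                nlinarith
            have hprod : ((res 𝒜 d (E \ C)).card : ℝ) ≤ ∏ i, ((res 𝒜 d (EE i)).card : ℝ) := by
              rw [← Nat.cast_prod]
              exact_mod_cast res_card_le_prod q (E \ C)
            have hprod2 : ∏ i, ((res 𝒜 d (EE i)).card : ℝ)
                ≤ ∏ i, (2 : ℝ) ^ ((1 - 2 * ε) * ((EE i).card : ℝ) + c * ((u i : ℝ) - 1)) :=
              Finset.prod_le_prod (fun i _ => by positivity) (fun i _ => hble i)
            have hsum : ∑ i, ((1 - 2 * ε) * ((EE i).card : ℝ) + c * ((u i : ℝ) - 1))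
                = (1 - 2 * ε) * ((E.card : ℝ) - (C.card : ℝ))
                  + c * (((VV T E).card : ℝ) - (r : ℝ)) := by
              rw [Finset.sum_add_distrib, ← Finset.mul_sum, ← Finset.mul_sum]
              congr 1
              · congr 1
                rw [← hECcard, ← hsum_e]
                push_cast
                rfl
              · congr 1
                rw [Finset.sum_sub_distrib]
                rw [show ∑ i : Fin r, ((u i : ℝ)) = (((VV T E).card : ℕ) : ℝ) by
                  rw [← hsum_u]; push_cast; rfl]
                simp
            have hmul : N ≤ (2 : ℝ) ^ ((C.card : ℕ) : ℝ) * ((res 𝒜 d (E \ C)).card : ℝ) := by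
              rw [Real.rpow_natCast, hN]
              exact_mod_cast res_card_le_mul (𝒜 := 𝒜) (d := d) T h𝒜 hT hCE
            have hchain : (2 : ℝ) ^ ((1 - 2 * ε) * (E.card : ℝ)
                  + c * (((VV T E).card : ℝ) - 1))
                ≤ (2 : ℝ) ^ (((C.card : ℕ) : ℝ) + ((1 - 2 * ε) * ((E.card : ℝ) - (C.card : ℝ))
                  + c * (((VV T E).card : ℝ) - (r : ℝ)))) := by
              calc (2 : ℝ) ^ ((1 - 2 * ε) * (E.card : ℝ) + c * (((VV T E).card : ℝ) - 1))
                  ≤ N := hInv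
                _ ≤ (2 : ℝ) ^ ((C.card : ℕ) : ℝ) * ((res 𝒜 d (E \ C)).card : ℝ) := hmul
                _ ≤ (2 : ℝ) ^ ((C.card : ℕ) : ℝ) *
                      ∏ i, (2 : ℝ) ^ ((1 - 2 * ε) * ((EE i).card : ℝ) + c * ((u i : ℝ) - 1)) := by
                    apply mul_le_mul_of_nonneg_left (le_trans hprod hprod2)
                      (Real.rpow_nonneg (by norm_num) _)
                _ = _ := by
                    rw [← Real.rpow_sum_of_pos two_pos, ← Real.rpow_add two_pos, hsum]
            have hexp := (Real.rpow_le_rpow_left_iff one_lt_two).1 hchain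
            rw [← hca]
            nlinarith
        -- final contradiction from (X)
        have h1 : 2 * ε * (C.card : ℝ) ≤ (C.card : ℝ) := by nlinarith
        linarith
      obtain ⟨i, hEine, hInvi⟩ := hstep
      have hssub : EE i ⊂ E := by
        rw [Finset.ssubset_iff_of_subset ((Finset.filter_subset _ _).trans Finset.sdiff_subset)]
        haveI : Nontrivial (Fin r) := Fin.nontrivial_iff_two_le.2 hr
        obtain ⟨i', hi'⟩ := exists_ne i
        obtain ⟨x, hx, hPx⟩ := hsurj i'
        obtain ⟨j, hjE, hxj⟩ := Finset.mem_biUnion.1 hx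
        refine ⟨j, hjE, ?_⟩
        intro hji
        have hj' := Finset.mem_filter.1 hji
        have hjC : j ∉ C := (Finset.mem_sdiff.1 hj'.1).2
        have heq := hmono j hjE hjC x hxj
        rw [hPx] at heq
        exact hi' (heq.trans hj'.2)
      exact ih (EE i) (by have := Finset.card_lt_card hssub; omega) hEine hInvi


end GoodSG

/-- finding a good subgraph: if `𝒜` is a large family of allocations consistent
with the pairs `T_j`, then there are bidders `V` and items/edges `E` (with both endpoints in `V`)
such that every partition of `V` into `r ≥ 2` nonempty parts has many crossing edges `C`, and
fixing the allocation of the items of `C` keeps at most a `2^(-(1-2ε)|C|)` fraction of the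
restrictions `𝒜|_E`. -/
theorem exists_good_subgraph
    (s t : ℕ) (hs : 1 ≤ s) (ht : 2 ≤ t)
    (T : Fin s → Finset (Fin t)) (hT : ∀ j, (T j).card = 2)
    (𝒜 : Set (Fin s → Fin t)) (h𝒜 : ∀ A ∈ 𝒜, ∀ j, A j ∈ T j)
    (ε : ℝ) (hε0 : 0 < ε) (hε : ε ≤ 1 / 2)
    (hcard : (2 : ℝ) ^ ((1 - ε) * (s : ℝ)) ≤ (𝒜.ncard : ℝ)) :
    ∃ (V : Finset (Fin t)) (E : Finset (Fin s)),
      2 ≤ V.card ∧ (∀ j ∈ E, T j ⊆ V) ∧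
      ∀ (r : ℕ), 2 ≤ r → ∀ P : Fin t → Fin r,
        (∀ p : Fin r, ∃ i ∈ V, P i = p) →
        let C : Finset (Fin s) := E.filter fun j => ∃ a ∈ T j, ∃ b ∈ T j, P a ≠ P b
        let 𝒜E : Set ({x : Fin s // x ∈ E} → Fin t) :=
          (fun (A : Fin s → Fin t) (x : {x : Fin s // x ∈ E}) => A x.1) '' 𝒜
        (ε * ((r : ℝ) - 1) * s / t ≤ (C.card : ℝ)) ∧
        ∀ g : Fin s → Fin t, (∀ j ∈ C, g j ∈ T j) →
          (({B ∈ 𝒜E | ∀ x : {x : Fin s // x ∈ E}, x.1 ∈ C → B x = g x.1}.ncard : ℝ)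
            ≤ (2 : ℝ) ^ (-(1 - 2 * ε) * (C.card : ℝ)) * (𝒜E.ncard : ℝ)) := by
  have ht1 : (0 : ℝ) < (t : ℝ) - 1 := by
    have : (2 : ℝ) ≤ (t : ℝ) := by exact_mod_cast ht
    linarith
  set d : Fin t := ⟨0, by omega⟩ with hd
  have h𝒜ne : 𝒜.Nonempty := by
    rw [Set.nonempty_iff_ne_empty]
    intro h0
    rw [h0] at hcard
    simp only [Set.ncard_empty, Nat.cast_zero] at hcard
    have := Real.rpow_pos_of_pos (two_pos) ((1 - ε) * (s : ℝ))
    linarith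
  haveI : Nonempty (Fin s) := ⟨⟨0, hs⟩⟩
  have huniv_ne : (Finset.univ : Finset (Fin s)).Nonempty := Finset.univ_nonempty
  have hres_univ : GoodSG.res 𝒜 d Finset.univ = (Set.toFinite 𝒜).toFinset := by
    have hpad : GoodSG.pad (Finset.univ : Finset (Fin s)) d = id := by
      funext A j
      simp [GoodSG.pad]
    rw [GoodSG.res, hpad, Finset.image_id]
  have hInv0 : GoodSG.Inv T 𝒜 d ε Finset.univ := by
    unfold GoodSG.Inv
    have hcard_univ : ((Finset.univ : Finset (Fin s)).card : ℝ) = (s : ℝ) := by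
      simp
    have hres_card : ((GoodSG.res 𝒜 d Finset.univ).card : ℝ) = (𝒜.ncard : ℝ) := by
      rw [hres_univ]
      rw [Set.ncard_eq_toFinset_card 𝒜 (Set.toFinite 𝒜)]
    rw [hres_card, hcard_univ]
    refine le_trans ?_ hcard
    rw [Real.rpow_le_rpow_left_iff one_lt_two]
    have hv : ((GoodSG.VV T (Finset.univ : Finset (Fin s))).card : ℝ) ≤ (t : ℝ) := by
      have h1 := Finset.card_le_univ (GoodSG.VV T (Finset.univ : Finset (Fin s)))
      simp only [Finset.card_univ, Fintype.card_fin] at h1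
      exact_mod_cast h1
    have hs0 : (0 : ℝ) < (s : ℝ) := by
      have : (1 : ℝ) ≤ (s : ℝ) := by exact_mod_cast hs
      linarith
    have hkey : ε * (s : ℝ) / ((t : ℝ) - 1) * (((GoodSG.VV T (Finset.univ : Finset (Fin s))).card : ℝ) - 1)
        ≤ ε * (s : ℝ) := by
      rw [div_mul_eq_mul_div, div_le_iff₀ ht1]
      have h1 : (0 : ℝ) ≤ ε * (s : ℝ) := by positivity
      nlinarith
    nlinarith
  obtain ⟨E', hE'ne, hFinal⟩ := GoodSG.main_rec hs ht T hT 𝒜 h𝒜 h𝒜ne ε hε0 hε d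
      (Finset.univ : Finset (Fin s)).card Finset.univ le_rfl huniv_ne hInv0
  refine ⟨GoodSG.VV T E', E', GoodSG.two_le_VV_card T hT hE'ne,
    fun j hj => Finset.subset_biUnion_of_mem T hj, ?_⟩
  intro r hr P hP
  obtain ⟨h1, h2⟩ := hFinal r hr P hP
  refine ⟨h1, ?_⟩
  intro g hgT
  rw [GoodSG.ncard_image_res_filter 𝒜 d (Finset.filter_subset _ E') g,
    GoodSG.ncard_image_res 𝒜 d E']
  exact h2 g
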